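/- Let $n \ge 2$ and suppose a search process on OneMax has upper triangular transition matrix dominated by the auxiliary bidiagonal matrix with diagonal entries $s_{j,j} = 1 - \frac{j}{n}(1-\frac{1}{n})^{n-1}$ and superdiagonal $s_{j,j+1} = \frac{j+1}{n}(1-\frac{1}{n})^{n-1}$. With $e = (1,\dots,n)'$ and $p^{[0]}_i = \binom{n}{i}/2^n$, it holds that $e' S^t p^{[0]} = \frac{n}{2}\left(1 - \frac{1}{n}\left(1-\frac{1}{n}\right)^{n-1}\right)^t \le \frac{n}{2}\left(1 - \frac{1}{ne}\right)^t$ for all positive integers $t$. -/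

import Mathlib

open Matrix Finset

lemma exp_neg_one_le_aux (n : ℕ) (hn : 2 ≤ n) :
    Real.exp (-1) ≤ (1 - 1/(n:ℝ))^(n-1) := by
  obtain ⟨m, rfl⟩ : ∃ m, n = m + 1 := ⟨n-1, by omega⟩
  have hm : (1:ℝ) ≤ m := by exact_mod_cast Nat.one_le_iff_ne_zero.mpr (by omega)
  have hm0 : (0:ℝ) < m := by linarith
  have h1 : Real.exp (-(1/(m:ℝ))) ≤ 1 - 1/((m:ℝ)+1) := by
    have h2 : (1/(m:ℝ)) + 1 ≤ Real.exp (1/(m:ℝ)) := Real.add_one_le_exp _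
    have h3 : ((1/(m:ℝ)) + 1)⁻¹ = 1 - 1/((m:ℝ)+1) := by field_simp; ring
    rw [Real.exp_neg, ← h3]
    exact inv_anti₀ (by positivity) h2
  calc Real.exp (-1 : ℝ) = Real.exp (-(1/(m:ℝ))) ^ m := by
        rw [← Real.exp_nat_mul]; congr 1; field_simp
    _ ≤ (1 - 1/((m:ℝ)+1)) ^ m := pow_le_pow_left₀ (Real.exp_pos _).le h1 m
    _ = (1 - 1/((m:ℕ)+1:ℕ):ℝ)^(m+1-1) := by push_cast; ring_nf

/-- expected approximation error for the auxiliary bidiagonal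
search dominating the (1+1)EA on OneMax. -/
theorem stmt_10 (n : ℕ) (hn : 2 ≤ n)
    (S : Matrix (Fin n) (Fin n) ℝ)
    (hS : S = Matrix.of fun i j : Fin n =>
      if j.val = i.val then 1 - ((i.val : ℝ) + 1) / n * (1 - 1 / n) ^ (n - 1)
      else if j.val = i.val + 1 then ((i.val : ℝ) + 2) / n * (1 - 1 / n) ^ (n - 1)
      else 0)
    (e p : Fin n → ℝ)
    (he : ∀ i : Fin n, e i = (i.val : ℝ) + 1)
    (hp : ∀ i : Fin n, p i = (n.choose (i.val + 1) : ℝ) / 2 ^ n)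
    (t : ℕ) (ht : 1 ≤ t) :
    e ⬝ᵥ (S ^ t).mulVec p
        = (n : ℝ) / 2 * (1 - 1 / n * (1 - 1 / n) ^ (n - 1)) ^ t ∧
    e ⬝ᵥ (S ^ t).mulVec p ≤ (n : ℝ) / 2 * (1 - 1 / (n * Real.exp 1)) ^ t := by
  have hn2 : (2:ℝ) ≤ n := by exact_mod_cast hn
  have hn0 : (0:ℝ) < n := by linarith
  -- the left eigenvector identity
  have hrow : e ᵥ* S = (1 - 1 / (n:ℝ) * (1 - 1 / n) ^ (n - 1)) • e := by
    funext j
    simp only [Pi.smul_apply, smul_eq_mul, vecMul, dotProduct, hS, Matrix.of_apply]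
    rcases j with ⟨jv, hjv⟩
    match jv, hjv with
    | 0, hjv =>
      rw [Finset.sum_eq_single ⟨0, hjv⟩]
      · simp [he]
      · intro i _ hi
        have h0 : i.val ≠ 0 := fun h => hi (Fin.ext h)
        simp [Ne.symm h0]
      · simp
    | k+1, hjv =>
      have hk : k < n := by omega
      have hsplit : ∀ i : Fin n,
          e i * (if (⟨k+1, hjv⟩ : Fin n).val = i.val then 1 - ((i.val : ℝ) + 1) / n * (1 - 1 / n) ^ (n - 1)
            else if (⟨k+1, hjv⟩ : Fin n).val = i.val + 1 then ((i.val : ℝ) + 2) / n * (1 - 1 / n) ^ (n - 1)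
            else 0)
          = (if i = ⟨k+1, hjv⟩ then ((k:ℝ)+2) * (1 - ((k:ℝ)+2) / n * (1 - 1 / n) ^ (n - 1)) else 0)
            + (if i = ⟨k, hk⟩ then ((k:ℝ)+1) * (((k:ℝ)+2) / n * (1 - 1 / n) ^ (n - 1)) else 0) := by
        intro i
        by_cases h1 : i = ⟨k+1, hjv⟩
        · subst h1
          simp only [he, Fin.ext_iff]
          norm_num
          ring
        · by_cases h2 : i = ⟨k, hk⟩
          · subst h2
            have h1' : (⟨k, hk⟩ : Fin n) = ⟨k+1, hjv⟩ ↔ False := by simp [Fin.ext_iff]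
            simp only [he, Fin.ext_iff, h1']
            norm_num
          · have hv1 : (k+1 : ℕ) ≠ i.val := fun h => h1 (Fin.ext h.symm)
            have hv2 : (k : ℕ) ≠ i.val := fun h => h2 (Fin.ext h.symm)
            have hv2' : (k+1 : ℕ) ≠ i.val + 1 := by omega
            rw [if_neg hv1, if_neg hv2', if_neg h1, if_neg h2]
            ring
      rw [Finset.sum_congr rfl (fun i _ => hsplit i), Finset.sum_add_distrib,
        Finset.sum_ite_eq', Finset.sum_ite_eq', if_pos (Finset.mem_univ _),
        if_pos (Finset.mem_univ _)]
      simp only [he]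
      push_cast
      field_simp
      ring
  -- the initial expectation
  have hdp : e ⬝ᵥ p = (n:ℝ)/2 := by
    obtain ⟨m, rfl⟩ : ∃ m, n = m + 1 := ⟨n-1, by omega⟩
    have hnat : ∑ k ∈ Finset.range (m+1), (k+1) * (m+1).choose (k+1) = (m+1) * 2^m := by
      calc ∑ k ∈ Finset.range (m+1), (k+1) * (m+1).choose (k+1)
          = ∑ k ∈ Finset.range (m+1), (m+1) * m.choose k := by
            refine Finset.sum_congr rfl fun k _ => ?_
            rw [mul_comm, ← Nat.add_one_mul_choose_eq, mul_comm]
        _ = (m+1) * 2^m := by rw [← Finset.mul_sum, Nat.sum_range_choose]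
    have hthis : e ⬝ᵥ p
        = (∑ k ∈ Finset.range (m+1), ((k:ℝ)+1) * ((m+1).choose (k+1))) / 2^(m+1) := by
      simp only [dotProduct, he, hp]
      rw [← Fin.sum_univ_eq_sum_range (fun k => ((k:ℝ)+1) * ((m+1).choose (k+1)))]
      rw [Finset.sum_div]
      refine Finset.sum_congr rfl fun i _ => ?_
      ring
    rw [hthis]
    have hc : (∑ k ∈ Finset.range (m+1), ((k:ℝ)+1) * ((m+1).choose (k+1)))
        = ((m:ℝ)+1) * 2^m := by exact_mod_cast congrArg (Nat.cast : ℕ → ℝ) hnat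
    rw [hc]
    push_cast
    rw [pow_succ]
    field_simp
  -- the main formula by induction
  have hmain : ∀ s : ℕ, e ⬝ᵥ (S^s).mulVec p
      = (1 - 1 / (n:ℝ) * (1 - 1 / n) ^ (n - 1))^s * ((n:ℝ)/2) := by
    intro s
    induction s with
    | zero => simpa using hdp
    | succ s ih =>
      rw [pow_succ', ← Matrix.mulVec_mulVec, Matrix.dotProduct_mulVec, hrow,
        smul_dotProduct, smul_eq_mul, ih, pow_succ]
      ring
  have heq := hmain t
  refine ⟨by rw [heq]; ring, ?_⟩
  rw [heq]
  -- bounds on the base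
  have hb0 : (0:ℝ) ≤ 1 - 1/(n:ℝ) := by
    have : 1/(n:ℝ) ≤ 1/2 := by
      apply one_div_le_one_div_of_le <;> linarith
    linarith
  have hq0 : (0:ℝ) ≤ (1 - 1/(n:ℝ))^(n-1) := pow_nonneg hb0 _
  have hq1 : (1 - 1/(n:ℝ))^(n-1) ≤ 1 := by
    apply pow_le_one₀ hb0
    have : 0 < 1/(n:ℝ) := by positivity
    linarith
  have hbase0 : (0:ℝ) ≤ 1 - 1 / (n:ℝ) * (1 - 1 / n) ^ (n - 1) := by
    have h1n : 1/(n:ℝ) ≤ 1 := by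
      rw [div_le_one hn0]; linarith
    have := mul_le_one₀ h1n hq0 hq1
    linarith
  have hbasele : 1 - 1 / (n:ℝ) * (1 - 1 / n) ^ (n - 1)
      ≤ 1 - 1 / ((n:ℝ) * Real.exp 1) := by
    have hkey := exp_neg_one_le_aux n hn
    have h2 : 1/(n:ℝ) * Real.exp (-1) ≤ 1/(n:ℝ) * (1 - 1/n)^(n-1) :=
      mul_le_mul_of_nonneg_left hkey (by positivity)
    have h3 : 1 / ((n:ℝ) * Real.exp 1) = 1/(n:ℝ) * Real.exp (-1) := by
      rw [Real.exp_neg]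
      field_simp
    linarith [h3 ▸ h2]
  have hfin : (1 - 1 / (n:ℝ) * (1 - 1 / n) ^ (n - 1))^t
      ≤ (1 - 1 / ((n:ℝ) * Real.exp 1))^t := pow_le_pow_left₀ hbase0 hbasele t
  calc (1 - 1 / (n:ℝ) * (1 - 1 / n) ^ (n - 1))^t * ((n:ℝ)/2)
      ≤ (1 - 1 / ((n:ℝ) * Real.exp 1))^t * ((n:ℝ)/2) := by
        apply mul_le_mul_of_nonneg_right hfin; linarith
    _ = (n : ℝ) / 2 * (1 - 1 / (n * Real.exp 1)) ^ t := by ring
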